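/- For the Zagreb index Z_n of a plane-oriented recursive tree on n nodes, Z_n / (n log n) converges to 2 in probability (and in L¹) as n → ∞. -/

import Mathlib

open MeasureTheory Filter

/-- Cauchy–Schwarz: first absolute moment bounded by the square root of the
second moment, on a probability space. -/
lemma aux_l1_le_sqrt_l2 {Ω : Type*} [MeasureSpace Ω]
    [IsProbabilityMeasure (volume : Measure Ω)]
    {X : Ω → ℝ} (hX : MemLp X 2 volume) :
    ∫ ω, |X ω| ≤ Real.sqrt (∫ ω, (X ω) ^ 2) := by
  have habs : MemLp (fun ω => |X ω|) 2 volume := hX.abs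
  have h := ProbabilityTheory.variance_nonneg (fun ω => |X ω|) volume
  rw [ProbabilityTheory.variance_eq_sub habs] at h
  have hsq : (∫ ω, |X ω|) ^ 2 ≤ ∫ ω, (X ω) ^ 2 := by
    have heq : (∫ ω, ((fun ω => |X ω|) ^ 2) ω) = ∫ ω, (X ω) ^ 2 := by
      simp [sq_abs]
    rw [heq] at h
    linarith [sub_nonneg.mp h]
  exact (Real.le_sqrt (integral_nonneg fun ω => abs_nonneg _)
    (le_trans (sq_nonneg _) hsq)).mpr hsq

open MeasureTheory Filter in
/-- Weak law for the Zagreb index of a PORT: if `Z n : Ω → ℝ` is the Zagreb index of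
a PORT on `n` nodes — square-integrable, with mean `E[Z_n] = 2(n−1)H_{n−1}` and
variance `Var[Z_n] = (16 − 2π²/3) n² + O(n^{3/2})` — then `Z_n/(n log n) → 2` both in
`L¹` and in probability (in measure) as `n → ∞`. -/
theorem port_zagreb_weak_law {Ω : Type*} [MeasureSpace Ω]
    [IsProbabilityMeasure (volume : Measure Ω)]
    (Z : ℕ → Ω → ℝ) (hL2 : ∀ n, MemLp (Z n) 2 volume)
    (hmean : ∀ n : ℕ, 1 ≤ n → ∫ ω, Z n ω = 2 * ((n : ℝ) - 1) * (harmonic (n - 1) : ℝ))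
    (hvar : ∃ C : ℝ, ∀ n : ℕ, 2 ≤ n →
      |ProbabilityTheory.variance (Z n) volume - (16 - 2 * Real.pi ^ 2 / 3) * (n : ℝ) ^ 2| ≤
        C * (n : ℝ) ^ ((3 : ℝ) / 2)) :
    Tendsto (fun n : ℕ => ∫ ω, |Z n ω / ((n : ℝ) * Real.log n) - 2|) atTop (nhds 0) ∧
      TendstoInMeasure volume (fun n ω => Z n ω / ((n : ℝ) * Real.log n)) atTop
        (fun _ => (2 : ℝ)) := by
  obtain ⟨C, hC⟩ := hvar
  have hZint : ∀ n, Integrable (Z n) volume := fun n => (hL2 n).integrable one_le_two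
  have hInt : ∀ n, Integrable (fun ω => Z n ω / ((n : ℝ) * Real.log n)) volume :=
    fun n => (hZint n).div_const _
  -- logarithm tends to infinity
  have hlog : Tendsto (fun n : ℕ => Real.log n) atTop atTop :=
    Real.tendsto_log_atTop.comp tendsto_natCast_atTop_atTop
  have hlogpos : ∀ n : ℕ, 2 ≤ n → 0 < Real.log n := fun n hn =>
    Real.log_pos (by exact_mod_cast Nat.lt_of_lt_of_le one_lt_two hn)
  -- positivity of the normalizing constant
  have hcpos : ∀ n : ℕ, 2 ≤ n → 0 < (n : ℝ) * Real.log n := by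
    intro n hn
    have hn0 : (0 : ℝ) < n := by exact_mod_cast Nat.lt_of_lt_of_le two_pos hn
    exact mul_pos hn0 (hlogpos n hn)
  -- Part A : the variance term tends to 0
  have hA : Tendsto (fun n : ℕ =>
      Real.sqrt (ProbabilityTheory.variance (Z n) volume) / ((n : ℝ) * Real.log n))
      atTop (nhds 0) := by
    set K := Real.sqrt (16 + |C|) with hK
    refine squeeze_zero' ?_ ?_ (Tendsto.div_atTop (tendsto_const_nhds (x := K)) hlog)
    · filter_upwards [eventually_ge_atTop 2] with n hn
      exact div_nonneg (Real.sqrt_nonneg _) (hcpos n hn).le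
    · filter_upwards [eventually_ge_atTop 2] with n hn
      have hn0 : (0 : ℝ) < n := by exact_mod_cast Nat.lt_of_lt_of_le two_pos hn
      have hn1 : (1 : ℝ) ≤ n := by exact_mod_cast Nat.one_le_of_lt hn
      have hvle : ProbabilityTheory.variance (Z n) volume ≤ (16 + |C|) * (n : ℝ) ^ 2 := by
        have h1 := abs_le.mp (hC n hn)
        have h3 : (n : ℝ) ^ ((3 : ℝ) / 2) ≤ (n : ℝ) ^ 2 := by
          have := Real.rpow_le_rpow_of_exponent_le hn1 (by norm_num : (3 : ℝ) / 2 ≤ 2)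
          rwa [Real.rpow_two] at this
        have h4 : C * (n : ℝ) ^ ((3 : ℝ) / 2) ≤ |C| * (n : ℝ) ^ 2 :=
          calc C * (n : ℝ) ^ ((3 : ℝ) / 2) ≤ |C| * (n : ℝ) ^ ((3 : ℝ) / 2) :=
                mul_le_mul_of_nonneg_right (le_abs_self C) (Real.rpow_nonneg hn0.le _)
            _ ≤ |C| * (n : ℝ) ^ 2 := mul_le_mul_of_nonneg_left h3 (abs_nonneg C)
        nlinarith [sq_nonneg Real.pi, sq_nonneg (n : ℝ)]
      have hsqrt : Real.sqrt (ProbabilityTheory.variance (Z n) volume) ≤ K * n := by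
        have heq : Real.sqrt ((16 + |C|) * (n : ℝ) ^ 2) = K * n := by
          rw [Real.sqrt_mul (by positivity), Real.sqrt_sq hn0.le]
        rw [← heq]
        exact Real.sqrt_le_sqrt hvle
      calc Real.sqrt (ProbabilityTheory.variance (Z n) volume) / ((n : ℝ) * Real.log n)
          ≤ K * n / ((n : ℝ) * Real.log n) :=
            div_le_div_of_nonneg_right hsqrt (hcpos n hn).le
        _ = K / Real.log n := by
            rw [mul_comm K (n : ℝ), mul_div_mul_left _ _ hn0.ne']
  -- Part B : the mean term tends to 2
  have hB : Tendsto (fun n : ℕ =>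
      2 * ((n : ℝ) - 1) * (harmonic (n - 1) : ℝ) / ((n : ℝ) * Real.log n))
      atTop (nhds 2) := by
    have h1 : Tendsto (fun n : ℕ => ((n : ℝ) - 1) / n) atTop (nhds 1) := by
      have ht : Tendsto (fun n : ℕ => 1 - ((n : ℝ))⁻¹) atTop (nhds (1 - 0)) :=
        tendsto_const_nhds.sub (tendsto_inv_atTop_zero.comp tendsto_natCast_atTop_atTop)
      rw [sub_zero] at ht
      refine ht.congr' ?_
      filter_upwards [eventually_ge_atTop 1] with n hn
      have hn0 : (n : ℝ) ≠ 0 := by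
        have : (0 : ℝ) < n := by exact_mod_cast hn
        exact this.ne'
      field_simp
    have h2 : Tendsto (fun n : ℕ => (harmonic (n - 1) : ℝ) / Real.log n) atTop (nhds 1) := by
      have hupper : Tendsto (fun n : ℕ => 1 + (Real.log n)⁻¹) atTop (nhds (1 + 0)) :=
        tendsto_const_nhds.add (tendsto_inv_atTop_zero.comp hlog)
      rw [add_zero] at hupper
      refine tendsto_of_tendsto_of_tendsto_of_le_of_le' tendsto_const_nhds hupper ?_ ?_
      · filter_upwards [eventually_ge_atTop 2] with n hn
        have hl := hlogpos n hn
        have hbound : Real.log n ≤ (harmonic (n - 1) : ℝ) := by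
          have := log_add_one_le_harmonic (n - 1)
          rwa [Nat.sub_add_cancel (Nat.one_le_of_lt hn)] at this
        exact (one_le_div hl).mpr hbound
      · filter_upwards [eventually_ge_atTop 2] with n hn
        have hl := hlogpos n hn
        have hbound : (harmonic (n - 1) : ℝ) ≤ 1 + Real.log n := by
          refine (harmonic_le_one_add_log (n - 1)).trans ?_
          have hle : ((n - 1 : ℕ) : ℝ) ≤ (n : ℝ) := by exact_mod_cast Nat.sub_le n 1
          have hpos : (0 : ℝ) < ((n - 1 : ℕ) : ℝ) := by
            have : 1 ≤ n - 1 := Nat.le_sub_one_of_lt (Nat.lt_of_lt_of_le one_lt_two hn)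
            exact_mod_cast Nat.lt_of_lt_of_le Nat.zero_lt_one this
          exact add_le_add_right (Real.log_le_log hpos hle) 1
        calc (harmonic (n - 1) : ℝ) / Real.log n ≤ (1 + Real.log n) / Real.log n :=
              div_le_div_of_nonneg_right hbound hl.le
          _ = 1 + (Real.log n)⁻¹ := by
              rw [add_div, div_self hl.ne', one_div, add_comm]
    have hprod : Tendsto (fun n : ℕ => 2 * (((n : ℝ) - 1) / n * ((harmonic (n - 1) : ℝ) / Real.log n)))
        atTop (nhds (2 * (1 * 1))) := ((h1.mul h2).const_mul 2)
    rw [mul_one, mul_one] at hprod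
    refine hprod.congr' ?_
    filter_upwards [eventually_ge_atTop 2] with n hn
    have hn0 : (n : ℝ) ≠ 0 := by
      have : (0 : ℝ) < n := by exact_mod_cast Nat.lt_of_lt_of_le two_pos hn
      exact this.ne'
    have hl0 : Real.log n ≠ 0 := (hlogpos n hn).ne'
    field_simp
    try ring
  -- the L¹ bound
  have habs : Tendsto (fun n : ℕ =>
      |2 * ((n : ℝ) - 1) * (harmonic (n - 1) : ℝ) / ((n : ℝ) * Real.log n) - 2|)
      atTop (nhds 0) := by
    have := (hB.sub_const 2).abs
    simpa using this
  have key : Tendsto (fun n : ℕ => ∫ ω, |Z n ω / ((n : ℝ) * Real.log n) - 2|)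
      atTop (nhds 0) := by
    have hlim : Tendsto (fun n : ℕ =>
        Real.sqrt (ProbabilityTheory.variance (Z n) volume) / ((n : ℝ) * Real.log n)
          + |2 * ((n : ℝ) - 1) * (harmonic (n - 1) : ℝ) / ((n : ℝ) * Real.log n) - 2|)
        atTop (nhds (0 + 0)) := hA.add habs
    rw [add_zero] at hlim
    refine squeeze_zero' ?_ ?_ hlim
    · exact Eventually.of_forall fun n => integral_nonneg fun ω => abs_nonneg _
    · filter_upwards [eventually_ge_atTop 2] with n hn
      set c : ℝ := (n : ℝ) * Real.log n with hc
      have hcp : 0 < c := hcpos n hn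
      set m : ℝ := ∫ ω, Z n ω with hm
      -- pointwise triangle inequality
      have hpt : ∀ ω, |Z n ω / c - 2| ≤ |Z n ω - m| / c + |m / c - 2| := by
        intro ω
        have hrw : Z n ω / c - 2 = (Z n ω - m) / c + (m / c - 2) := by
          rw [sub_div]; ring
        rw [hrw]
        refine (abs_add_le _ _).trans ?_
        rw [abs_div, abs_of_pos hcp]
      -- integrate the pointwise bound
      have hint1 : Integrable (fun ω => |Z n ω / c - 2|) volume :=
        ((hInt n).sub (integrable_const 2)).abs
      have hint2a : Integrable (fun ω => |Z n ω - m| / c) volume := by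
        simpa using ((((hZint n).sub (integrable_const m)).abs).div_const c)
      have hint2 : Integrable (fun ω => |Z n ω - m| / c + |m / c - 2|) volume :=
        hint2a.add (integrable_const _)
      have hmono := integral_mono hint1 hint2 hpt
      have hint_eq : (∫ ω, (|Z n ω - m| / c + |m / c - 2|))
          = (∫ ω, |Z n ω - m|) / c + |m / c - 2| := by
        rw [integral_add hint2a (integrable_const _), integral_div, integral_const,
          probReal_univ, one_smul]
      rw [hint_eq] at hmono
      -- central absolute moment bounded by sqrt of variance
      have hvareq : ProbabilityTheory.variance (Z n) volume
          = ∫ ω, (Z n ω - m) ^ 2 := by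
        exact ProbabilityTheory.variance_eq_integral (hL2 n).aemeasurable
      have hcs : (∫ ω, |Z n ω - m|) ≤
          Real.sqrt (ProbabilityTheory.variance (Z n) volume) := by
        rw [hvareq]
        exact aux_l1_le_sqrt_l2 ((hL2 n).sub (memLp_const m))
      have hmc : m = 2 * ((n : ℝ) - 1) * (harmonic (n - 1) : ℝ) :=
        hmean n (Nat.one_le_of_lt hn)
      calc (∫ ω, |Z n ω / c - 2|) ≤ (∫ ω, |Z n ω - m|) / c + |m / c - 2| := hmono
        _ ≤ Real.sqrt (ProbabilityTheory.variance (Z n) volume) / c + |m / c - 2| :=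
            add_le_add_left (div_le_div_of_nonneg_right hcs hcp.le) _
        _ = Real.sqrt (ProbabilityTheory.variance (Z n) volume) / c
              + |2 * ((n : ℝ) - 1) * (harmonic (n - 1) : ℝ) / c - 2| := by rw [hmc]
  refine ⟨key, ?_⟩
  -- convergence in measure from L¹ convergence
  refine tendstoInMeasure_of_tendsto_eLpNorm (p := 1) one_ne_zero
    (fun n => (hInt n).aestronglyMeasurable) aestronglyMeasurable_const ?_
  have heq : ∀ n : ℕ, eLpNorm ((fun ω => Z n ω / ((n : ℝ) * Real.log n)) - fun _ => (2 : ℝ))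
      1 volume = ENNReal.ofReal (∫ ω, |Z n ω / ((n : ℝ) * Real.log n) - 2|) := by
    intro n
    have hi : Integrable ((fun ω => Z n ω / ((n : ℝ) * Real.log n)) - fun _ => (2 : ℝ))
        volume := (hInt n).sub (integrable_const 2)
    rw [eLpNorm_one_eq_lintegral_enorm, ← ofReal_integral_norm_eq_lintegral_enorm hi]
    congr 1
  have : Tendsto (fun n : ℕ =>
      ENNReal.ofReal (∫ ω, |Z n ω / ((n : ℝ) * Real.log n) - 2|)) atTop (nhds 0) := by
    have := (ENNReal.continuous_ofReal.tendsto 0).comp key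
    simpa [Function.comp_def] using this
  exact this.congr fun n => (heq n).symm
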